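/- If D ⊂ ℂ is a domain (nonempty open connected set) that is convex in the positive direction, then its Steiner symmetrization D♯ with respect to the real axis is also convex in the positive direction. -/
import Mathlib


open Complex MeasureTheory
open scoped ENNReal

/-- A set `A ⊆ ℂ` is convex in the positive direction if `z + t ∈ A`
for every `z ∈ A` and `t ≥ 0`. -/
def ConvexPosDir (A : Set ℂ) : Prop :=
  ∀ z ∈ A, ∀ t : ℝ, 0 ≤ t → z + t ∈ A

/-- Length of the intersection of `D` with the vertical line through `x ∈ ℝ`. -/
noncomputable def sliceLength (D : Set ℂ) (x : ℝ) : ℝ≥0∞ :=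
  volume {y : ℝ | (x : ℂ) + y * Complex.I ∈ D}

/-- The Steiner symmetrization of `D ⊆ ℂ` with respect to the real axis. -/
def steiner (D : Set ℂ) : Set ℂ :=
  {z : ℂ | ENNReal.ofReal (2 * |z.im|) < sliceLength D z.re}

/-- **Lemma 3.1.** If `D` is a domain convex in the positive direction, then so is
its Steiner symmetrization. -/
theorem steiner_convexPosDir (D : Set ℂ) (hne : D.Nonempty) (hopen : IsOpen D)
    (hconn : IsConnected D) (hconv : ConvexPosDir D) :
    ConvexPosDir (steiner D) := by
  intro z hz t ht
  simp only [steiner, Set.mem_setOf_eq, Complex.add_re, Complex.add_im,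
    Complex.ofReal_re, Complex.ofReal_im, add_zero] at hz ⊢
  refine lt_of_lt_of_le hz (measure_mono ?_)
  intro y hy
  have := hconv _ hy t ht
  have heq : (↑z.re : ℂ) + ↑y * Complex.I + ↑t = ↑(z.re + t) + ↑y * Complex.I := by
    push_cast; ring
  rwa [heq] at this
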